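/- arXiv:1604.07566 — 4 statements merged into one kernel-verified Lean document; each statement's English description precedes it below -/
import Mathlib

section
/- The number of Lyndon words of length n over a finite alphabet of size m equals the necklace number φ_n(m) = (1/n) ∑_{d | n} μ(d) m^{n/d}, where μ is the Möbius function. -/
/-- A Lyndon word: a nonempty word strictly smaller (lexicographically)
than all of its nontrivial proper suffixes. -/
def IsLyndon {X : Type} [LinearOrder X] (w : List X) : Prop :=
  w ≠ [] ∧ ∀ s t : List X, w = s ++ t → s ≠ [] → t ≠ [] → List.Lex (· < ·) w t

namespace LyndonAux

variable {X : Type} [LinearOrder X]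

/-! ### Powers of words -/

def pw (k : ℕ) (u : List X) : List X := (List.replicate k u).flatten

@[simp] lemma pw_zero (u : List X) : pw 0 u = [] := rfl

lemma pw_succ (k : ℕ) (u : List X) : pw (k+1) u = u ++ pw k u := by
  simp [pw, List.replicate_succ]

@[simp] lemma pw_one (u : List X) : pw 1 u = u := by simp [pw]

lemma pw_length (k : ℕ) (u : List X) : (pw k u).length = k * u.length := by
  induction k with
  | zero => simp
  | succ k ih => rw [pw_succ]; simp [ih, Nat.succ_mul]; ring

lemma pw_aux (a b : List X) (k : ℕ) : b ++ pw k (a ++ b) ++ a = pw (k+1) (b ++ a) := by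
  induction k with
  | zero => simp
  | succ k ih =>
      rw [pw_succ k, pw_succ (k+1)]
      calc b ++ ((a ++ b) ++ pw k (a ++ b)) ++ a
          = (b ++ a) ++ (b ++ pw k (a ++ b) ++ a) := by simp [List.append_assoc]
        _ = (b ++ a) ++ pw (k+1) (b ++ a) := by rw [ih]

lemma rotate_pw (u : List X) (k j : ℕ) (hj : j ≤ u.length) :
    (pw k u).rotate j = pw k (u.rotate j) := by
  cases k with
  | zero => simp
  | succ k =>
      have hlen : j ≤ (pw (k+1) u).length := by
        rw [pw_length]; calc j ≤ u.length := hj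
          _ ≤ (k+1) * u.length := Nat.le_mul_of_pos_left _ (Nat.succ_pos k)
      rw [List.rotate_eq_drop_append_take hlen, pw_succ,
        List.drop_append_of_le_length hj, List.take_append_of_le_length hj,
        List.rotate_eq_drop_append_take hj]
      have := pw_aux (u.take j) (u.drop j) k
      rw [List.take_append_drop] at this
      rw [List.append_assoc, ← List.append_assoc (u.drop j), this]

lemma rotate_pw_self (u : List X) (k : ℕ) : (pw k u).rotate u.length = pw k u := by
  rw [rotate_pw u k u.length le_rfl, List.rotate_length]

lemma take_pw (t : List X) (a k : ℕ) (h : a ≤ k) :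
    (pw k t).take (a * t.length) = pw a t := by
  induction a generalizing k with
  | zero => simp
  | succ a ih =>
      obtain ⟨k, rfl⟩ : ∃ k', k = k' + 1 := ⟨k - 1, by omega⟩
      rw [pw_succ k, pw_succ a, Nat.succ_mul, Nat.add_comm (a * t.length),
        List.take_length_add_append, ih k (by omega)]

/-! ### Periods -/

lemma rotate_mul (w : List X) (d : ℕ) (h : w.rotate d = w) (q : ℕ) :
    w.rotate (q * d) = w := by
  induction q with
  | zero => simp
  | succ q ih => rw [Nat.succ_mul, ← List.rotate_rotate, ih, h]

lemma eq_pw_of_rotate (w : List X) (d : ℕ) (hd : 0 < d) (hdvd : d ∣ w.length)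
    (hrot : w.rotate d = w) : w = pw (w.length / d) (w.take d) := by
  suffices H : ∀ (n : ℕ) (w : List X), w.length = n → ∀ d, 0 < d → d ∣ w.length →
      w.rotate d = w → w = pw (w.length / d) (w.take d) from
    H w.length w rfl d hd hdvd hrot
  clear hd hdvd hrot w d
  intro n
  induction n using Nat.strong_induction_on with
  | _ n ih =>
    intro w hn d hd hdvd hrot
    subst hn
    rcases Nat.eq_zero_or_pos w.length with h0 | h0
    · rw [List.length_eq_zero_iff] at h0
      subst h0; simp
    have hdle : d ≤ w.length := Nat.le_of_dvd h0 hdvd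
    rcases eq_or_lt_of_le hdle with heq | hlt
    · -- d = length
      rw [← heq, Nat.div_self hd, pw_one, List.take_of_length_le (le_of_eq heq.symm)]
    · -- d < length; then length ≥ 2d
      set a := w.take d with ha
      set b := w.drop d with hb
      have hab : a ++ b = w := List.take_append_drop d w
      have hba : b ++ a = w := by
        rw [← hrot, List.rotate_eq_drop_append_take hdle]
      have hlb : b.length = w.length - d := by simp [hb]
      obtain ⟨c, hc⟩ := hdvd
      rcases Nat.eq_zero_or_pos c with rfl | hc0
      · omega
      obtain ⟨c, rfl⟩ : ∃ c', c = c' + 1 := ⟨c - 1, by omega⟩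
      have hc2 : 2 ≤ c + 1 := by
        rcases Nat.eq_zero_or_pos c with rfl | h
        · omega
        · omega
      have hmul : d * 2 ≤ d * (c + 1) := Nat.mul_le_mul_left d hc2
      have hdlb : d ≤ b.length := by rw [hlb]; omega
      have hta : b.take d = a := by
        have h1 : (b ++ a).take d = b.take d := List.take_append_of_le_length hdlb
        have h2 : (a ++ b).take d = a := List.take_left' (by simp [ha]; omega)
        rw [hba] at h1; rw [hab] at h2; rw [h1] at h2; exact h2
      have hda : b.drop d ++ a = b := by
        have h1 : (b ++ a).drop d = b.drop d ++ a := List.drop_append_of_le_length hdlb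
        have h2 : (a ++ b).drop d = b := List.drop_left' (by simp [ha]; omega)
        rw [hba] at h1; rw [hab] at h2; rw [h1] at h2; exact h2
      have hrotb : b.rotate d = b := by
        rw [List.rotate_eq_drop_append_take hdlb, hta, hda]
      have hdvdb : d ∣ b.length := by
        rw [hlb]; exact Nat.dvd_sub ⟨c + 1, hc⟩ dvd_rfl
      have hblt : b.length < w.length := by rw [hlb]; omega
      have hres := ih b.length hblt b rfl d hd hdvdb hrotb
      rw [hta] at hres
      have hq : w.length / d = b.length / d + 1 := by
        rw [hlb, hc, Nat.mul_div_cancel_left _ hd, Nat.mul_succ, Nat.add_sub_cancel,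
          Nat.mul_div_cancel_left _ hd]
      rw [hq, pw_succ, ← hres, hab]


/-! ### Primitive words and the canonical decomposition -/

def Primitive (w : List X) : Prop :=
  w ≠ [] ∧ ∀ j, 0 < j → j < w.length → w.rotate j ≠ w

lemma exists_period (w : List X) (h0 : 0 < w.length) :
    ∃ k, 0 < k ∧ w.rotate k = w :=
  ⟨w.length, h0, List.rotate_length w⟩

/-- the minimal period -/
noncomputable def mp (w : List X) (h0 : 0 < w.length) : ℕ :=
  Nat.find (exists_period w h0)

lemma mp_pos (w : List X) (h0 : 0 < w.length) : 0 < mp w h0 :=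
  (Nat.find_spec (exists_period w h0)).1

lemma mp_rotate (w : List X) (h0 : 0 < w.length) : w.rotate (mp w h0) = w :=
  (Nat.find_spec (exists_period w h0)).2

lemma mp_dvd (w : List X) (h0 : 0 < w.length) {a : ℕ} (ha : w.rotate a = w) :
    mp w h0 ∣ a := by
  set d := mp w h0 with hd
  have hdpos : 0 < d := mp_pos w h0
  have h1 : w.rotate (a / d * d) = w := rotate_mul w d (mp_rotate w h0) (a / d)
  have h2 : w.rotate (a % d) = w := by
    have := List.rotate_rotate w (a / d * d) (a % d)
    rw [h1] at this
    rw [this, Nat.div_add_mod']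
    exact ha
  rcases Nat.eq_zero_or_pos (a % d) with hz | hpos
  · exact Nat.dvd_of_mod_eq_zero hz
  · exfalso
    have hlt : a % d < d := Nat.mod_lt _ hdpos
    exact Nat.find_min (exists_period w h0) hlt ⟨hpos, h2⟩

lemma mp_dvd_length (w : List X) (h0 : 0 < w.length) : mp w h0 ∣ w.length :=
  mp_dvd w h0 (List.rotate_length w)

lemma mp_le (w : List X) (h0 : 0 < w.length) : mp w h0 ≤ w.length :=
  Nat.le_of_dvd h0 (mp_dvd_length w h0)

lemma eq_pw_mp (w : List X) (h0 : 0 < w.length) :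
    w = pw (w.length / mp w h0) (w.take (mp w h0)) :=
  eq_pw_of_rotate w _ (mp_pos w h0) (mp_dvd_length w h0) (mp_rotate w h0)

lemma take_mp_primitive (w : List X) (h0 : 0 < w.length) :
    Primitive (w.take (mp w h0)) := by
  have hdpos := mp_pos w h0
  have hdle := mp_le w h0
  have hlen : (w.take (mp w h0)).length = mp w h0 := by
    rw [List.length_take, Nat.min_eq_left hdle]
  refine ⟨?_, ?_⟩
  · intro h; rw [← List.length_eq_zero_iff] at h; omega
  · intro j hj0 hjlt hrot
    rw [hlen] at hjlt
    have hw := eq_pw_mp w h0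
    have hrw : w.rotate j = w := by
      conv_lhs => rw [hw]
      rw [rotate_pw _ _ _ (by rw [hlen]; omega), hrot, ← hw]
    have hdvd := mp_dvd w h0 hrw
    have := Nat.le_of_dvd hj0 hdvd
    omega

/-- uniqueness of the primitive root -/
lemma root_unique (w u : List X) (h0 : 0 < w.length) (d : ℕ) (hd : 0 < d)
    (hdvd : d ∣ w.length) (hu : u.length = d) (hprim : Primitive u)
    (hw : w = pw (w.length / d) u) : d = mp w h0 ∧ u = w.take d := by
  have hdle : d ≤ w.length := Nat.le_of_dvd h0 hdvd
  have hkpos : 0 < w.length / d := Nat.div_pos hdle hd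
  have hu_take : u = w.take d := by
    obtain ⟨k, hk⟩ : ∃ k', w.length / d = k' + 1 := ⟨w.length / d - 1, by omega⟩
    rw [hw, hk, pw_succ]
    rw [List.take_left' hu]
  have hrotd : w.rotate d = w := by
    rw [← hu]
    conv_lhs => rw [hw]
    rw [rotate_pw_self, ← hw]
  set d0 := mp w h0 with hd0
  have hdvd0 : d0 ∣ d := mp_dvd w h0 hrotd
  have hd0pos : 0 < d0 := mp_pos w h0
  have hd0le : d0 ≤ d := Nat.le_of_dvd hd hdvd0
  rcases eq_or_lt_of_le hd0le with heq | hlt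
  · exact ⟨heq.symm, hu_take⟩
  · exfalso
    -- u is a power of t := w.take d0, hence not primitive
    set t := w.take d0 with ht
    have htlen : t.length = d0 := by simp [ht, List.length_take]; exact (mp_le w h0)
    have hwt := eq_pw_mp w h0
    obtain ⟨e, he⟩ := hdvd0
    have hepos : 0 < e := by
      rcases Nat.eq_zero_or_pos e with rfl | h; · omega
      · exact h
    have helek : e ≤ w.length / d0 := by
      have h1 : d ∣ w.length := hdvd
      have : d ≤ w.length := hdle
      have : e * d0 ≤ w.length := by rw [Nat.mul_comm, ← he]; exact hdle
      calc e = e * d0 / d0 := (Nat.mul_div_cancel e hd0pos).symm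
        _ ≤ w.length / d0 := Nat.div_le_div_right this
    have hut : u = pw e t := by
      rw [hu_take]
      conv_lhs => rw [hwt]
      rw [← hd0, ← ht]
      have : d = e * t.length := by rw [htlen, Nat.mul_comm, ← he]
      rw [this, take_pw t e _ helek]
    have : u.rotate d0 = u := by
      rw [hut, rotate_pw t e d0 (le_of_eq htlen.symm), ← htlen, List.rotate_length]
    exact hprim.2 d0 hd0pos (by omega) this

lemma exists_decomp (w : List X) (h0 : 0 < w.length) :
    ∃ d u, 0 < d ∧ d ∣ w.length ∧ u.length = d ∧ Primitive u ∧
      w = pw (w.length / d) u := by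
  refine ⟨mp w h0, w.take (mp w h0), mp_pos w h0, mp_dvd_length w h0, ?_,
    take_mp_primitive w h0, eq_pw_mp w h0⟩
  simp [List.length_take]
  exact mp_le w h0


/-! ### Lex lemmas -/

lemma lex_append_self (u t : List X) (ht : t ≠ []) : List.Lex (· < ·) u (u ++ t) := by
  induction u with
  | nil =>
      cases t with
      | nil => exact absurd rfl ht
      | cons a l => exact List.Lex.nil
  | cons a l ih => exact List.Lex.cons ih

lemma lex_append_left_cancel {c u v : List X}
    (h : List.Lex (· < ·) (c ++ u) (c ++ v)) : List.Lex (· < ·) u v := by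
  induction c with
  | nil => exact h
  | cons a l ih =>
      rw [List.cons_append, List.cons_append, List.cons_lex_cons_iff] at h
      exact ih (h.resolve_left (lt_irrefl a)).2

lemma lex_split {s₁ s₂ t₁ t₂ : List X} (hl : s₁.length = s₂.length)
    (h : List.Lex (· < ·) (s₁ ++ t₁) (s₂ ++ t₂)) :
    List.Lex (· < ·) s₁ s₂ ∨ (s₁ = s₂ ∧ List.Lex (· < ·) t₁ t₂) := by
  induction s₁ generalizing s₂ with
  | nil =>
      cases s₂ with
      | nil => exact Or.inr ⟨rfl, h⟩
      | cons b l => simp at hl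
  | cons a l ih =>
      cases s₂ with
      | nil => simp at hl
      | cons b l₂ =>
          simp only [List.cons_append] at h
          cases h with
          | rel hab => exact Or.inl (List.Lex.rel hab)
          | cons h' =>
              rcases ih (by simpa using hl) h' with h1 | ⟨rfl, h2⟩
              · exact Or.inl (List.Lex.cons h1)
              · exact Or.inr ⟨rfl, h2⟩

lemma lex_append_of_lex {s₁ s₂ : List X} (t₁ t₂ : List X) (hl : s₁.length = s₂.length)
    (h : List.Lex (· < ·) s₁ s₂) : List.Lex (· < ·) (s₁ ++ t₁) (s₂ ++ t₂) := by
  induction s₁ generalizing s₂ with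
  | nil =>
      cases s₂ with
      | nil => exact absurd h List.not_lex_nil
      | cons b l => simp at hl
  | cons a l ih =>
      cases s₂ with
      | nil => exact absurd h List.not_lex_nil
      | cons b l₂ =>
          cases h with
          | rel hab => exact List.Lex.rel hab
          | cons h' => exact List.Lex.cons (ih (by simpa using hl) h')

lemma lex_asymm {u v : List X} (h : List.Lex (· < ·) u v) :
    ¬ List.Lex (· < ·) v u := by
  have : IsAsymm X (· < ·) := ⟨fun a b => lt_asymm⟩
  exact asymm h

lemma lex_irrefl (u : List X) : ¬ List.Lex (· < ·) u u :=
  fun h => lex_asymm h h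

lemma lex_total {u v : List X} (hne : u ≠ v) :
    List.Lex (· < ·) u v ∨ List.Lex (· < ·) v u := by
  haveI : IsTrichotomous X (· < ·) := ⟨fun a b h1 h2 => le_antisymm (not_lt.mp h2) (not_lt.mp h1)⟩
  rcases trichotomous_of (List.Lex (· < ·)) u v with h | h | h
  · exact Or.inl h
  · exact absurd h hne
  · exact Or.inr h

/-! ### Lyndon facts -/

lemma lyndon_lex_rotate {w : List X} (hw : IsLyndon w) {k : ℕ}
    (hk0 : 0 < k) (hk : k < w.length) : List.Lex (· < ·) w (w.rotate k) := by
  have hs : w.take k ≠ [] := by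
    intro h
    have h' : min k w.length = 0 := by rw [← List.length_take, h]; rfl
    omega
  have ht : w.drop k ≠ [] := by
    intro h
    have h' : w.length - k = 0 := by rw [← List.length_drop, h]; rfl
    omega
  have hlex : List.Lex (· < ·) w (w.drop k) :=
    hw.2 (w.take k) (w.drop k) (List.take_append_drop k w).symm hs ht
  rw [List.rotate_eq_drop_append_take (le_of_lt hk)]
  exact List.Lex.append_right _ _ hlex

lemma lyndon_primitive {w : List X} (hw : IsLyndon w) : Primitive w := by
  refine ⟨hw.1, fun j hj0 hjlt hrot => ?_⟩
  have := lyndon_lex_rotate hw hj0 hjlt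
  rw [hrot] at this
  exact lex_irrefl w this

lemma lyndon_rotate_ne {w : List X} (hw : IsLyndon w) {k : ℕ}
    (hk0 : 0 < k) (hk : k < w.length) : ¬ IsLyndon (w.rotate k) := by
  intro hv
  have h1 : List.Lex (· < ·) w (w.rotate k) := lyndon_lex_rotate hw hk0 hk
  have hback : (w.rotate k).rotate (w.length - k) = w := by
    rw [List.rotate_rotate, Nat.add_sub_cancel' (le_of_lt hk), List.rotate_length]
  have h2 : List.Lex (· < ·) (w.rotate k) w := by
    have := lyndon_lex_rotate hv (k := w.length - k) (by omega)
      (by rw [List.length_rotate]; omega)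
    rwa [hback] at this
  exact lex_asymm h1 h2

lemma primitive_rotate {w : List X} (hw : Primitive w) (i : ℕ) :
    Primitive (w.rotate i) := by
  have hlen : (w.rotate i).length = w.length := List.length_rotate w i
  refine ⟨?_, fun j hj0 hjlt hrot => ?_⟩
  · intro h
    have := congrArg List.length h
    rw [hlen] at this
    exact hw.1 (List.length_eq_zero_iff.mp this)
  · rw [hlen] at hjlt
    have h1 : (w.rotate j).rotate i = w.rotate i := by
      rw [List.rotate_rotate, Nat.add_comm, ← List.rotate_rotate, hrot]
    have := List.rotate_injective i h1
    exact hw.2 j hj0 hjlt this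

lemma primitive_rotate_inj {w : List X} (hw : Primitive w) {i j : ℕ}
    (hi : i < w.length) (hj : j < w.length) (h : w.rotate i = w.rotate j) :
    i = j := by
  rcases Nat.le_total i j with hle | hle
  · by_contra hne
    have h1 : (w.rotate (j - i)).rotate i = w.rotate i := by
      rw [List.rotate_rotate, Nat.sub_add_cancel hle, h]
    have h2 := List.rotate_injective i h1
    exact hw.2 (j - i) (by omega) (by omega) h2
  · by_contra hne
    have h1 : (w.rotate (i - j)).rotate j = w.rotate j := by
      rw [List.rotate_rotate, Nat.sub_add_cancel hle, ← h]
    have h2 := List.rotate_injective j h1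
    exact hw.2 (i - j) (by omega) (by omega) h2


lemma list_lt_iff_lex {u v : List X} : u < v ↔ List.Lex (· < ·) u v := Iff.rfl

lemma lyndon_of_min {v : List X} (hvprim : Primitive v)
    (hmin : ∀ j, ¬ List.Lex (· < ·) (v.rotate j) v) : IsLyndon v := by
  refine ⟨hvprim.1, ?_⟩
  intro s t hst hsne htne
  have hkpos : 0 < s.length := List.length_pos_iff.mpr hsne
  have htpos : 0 < t.length := List.length_pos_iff.mpr htne
  have hlenst : s.length + t.length = v.length := by rw [hst]; simp
  have hs' : v.take s.length = s := by rw [hst, List.take_left]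
  have ht' : v.drop s.length = t := by rw [hst, List.drop_left]
  have hrot1 : v.rotate s.length = t ++ s := by
    rw [List.rotate_eq_drop_append_take (by omega), hs', ht']
  have hne : v ≠ t ++ s := by
    intro h
    have : v.rotate s.length = v := by rw [hrot1, ← h]
    exact hvprim.2 s.length hkpos (by omega) this
  have hlex : List.Lex (· < ·) v (t ++ s) := by
    rcases lex_total hne with h | h
    · exact h
    · exact absurd (by rwa [← hrot1] at h) (hmin s.length)
  have hc : v = v.take t.length ++ v.drop t.length := (List.take_append_drop t.length v).symm
  have hclen : (v.take t.length).length = t.length := by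
    rw [List.length_take]; omega
  rw [hc] at hlex
  rcases lex_split hclen hlex with h1 | ⟨heq, h2⟩
  · have h5 := lex_append_of_lex (v.drop t.length) ([] : List X) hclen h1
    rw [List.append_nil] at h5
    rw [hc]
    exact h5
  · exfalso
    have hulen : (v.drop t.length).length = s.length := by
      rw [List.length_drop]; omega
    have h3 := lex_append_of_lex t t hulen h2
    apply hmin t.length
    have h4 : v.rotate t.length = v.drop t.length ++ t := by
      rw [List.rotate_eq_drop_append_take (by omega), heq]
    rw [h4]
    conv_rhs => rw [hst]
    exact h3

lemma exists_lyndon_rotate {w : List X} (hw : Primitive w) :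
    ∃ i < w.length, IsLyndon (w.rotate i) := by
  have h0 : 0 < w.length := List.length_pos_iff.mpr hw.1
  set R : Finset (List X) := (Finset.range w.length).image (fun i => w.rotate i) with hR
  have hRne : R.Nonempty :=
    ⟨w.rotate 0, Finset.mem_image.mpr ⟨0, Finset.mem_range.mpr h0, rfl⟩⟩
  obtain ⟨i, hi, hvi⟩ := Finset.mem_image.mp (R.min'_mem hRne)
  rw [Finset.mem_range] at hi
  refine ⟨i, hi, ?_⟩
  have hmin : ∀ j, ¬ List.Lex (· < ·) ((w.rotate i).rotate j) (w.rotate i) := by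
    intro j hlex
    have hrw : (w.rotate i).rotate j = w.rotate ((i + j) % w.length) := by
      rw [List.rotate_rotate, List.rotate_mod]
    have hmem : (w.rotate i).rotate j ∈ R :=
      Finset.mem_image.mpr ⟨(i + j) % w.length,
        Finset.mem_range.mpr (Nat.mod_lt _ h0), hrw.symm⟩
    have hle := Finset.min'_le R _ hmem
    rw [← hvi] at hle
    exact absurd (list_lt_iff_lex.mpr hlex) (not_lt.mpr hle)
  exact lyndon_of_min (primitive_rotate hw i) hmin


/-! ### Counting -/

lemma finite_sub (m k : ℕ) (Q : List (Fin m) → Prop) :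
    Finite {w : List (Fin m) // w.length = k ∧ Q w} := by
  apply Finite.of_injective
    (fun w : {w : List (Fin m) // w.length = k ∧ Q w} =>
      (fun i : Fin k => w.1.get (Fin.cast w.2.1.symm i)))
  intro w w' h
  apply Subtype.ext
  apply List.ext_get (by rw [w.2.1, w'.2.1])
  intro i h1 h2
  have := congrFun h ⟨i, by rw [← w.2.1]; exact h1⟩
  exact this

noncomputable def Lc (m k : ℕ) : ℕ :=
  Nat.card {w : List (Fin m) // w.length = k ∧ IsLyndon w}

noncomputable def Pc (m k : ℕ) : ℕ :=
  Nat.card {w : List (Fin m) // w.length = k ∧ Primitive w}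

lemma card_words (m k : ℕ) :
    Nat.card {w : List (Fin m) // w.length = k} = m ^ k := by
  have hbij : Function.Bijective
      (fun g : Fin k → Fin m => (⟨List.ofFn g, List.length_ofFn (f := g)⟩ :
        {w : List (Fin m) // w.length = k})) := by
    constructor
    · intro g g' h
      exact List.ofFn_injective (congrArg Subtype.val h)
    · rintro ⟨w, hw⟩
      subst hw
      exact ⟨w.get, Subtype.ext (List.ofFn_get w)⟩
  rw [← Nat.card_eq_of_bijective _ hbij]
  simp [Nat.card_eq_fintype_card]

lemma step_A (m k : ℕ) (hk : 0 < k) : Pc m k = k * Lc m k := by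
  haveI := finite_sub m k IsLyndon
  have hbij : Function.Bijective
      (fun p : {w : List (Fin m) // w.length = k ∧ IsLyndon w} × Fin k =>
        (⟨p.1.1.rotate p.2.1,
          by rw [List.length_rotate]; exact p.1.2.1,
          primitive_rotate (lyndon_primitive p.1.2.2) p.2.1⟩ :
          {w : List (Fin m) // w.length = k ∧ Primitive w})) := by
    constructor
    · rintro ⟨⟨l, hl, hlyn⟩, ⟨j, hj⟩⟩ ⟨⟨l', hl', hlyn'⟩, ⟨j', hj'⟩⟩ h
      simp only [Subtype.mk.injEq, Prod.mk.injEq] at h ⊢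
      have h' : l.rotate j = l'.rotate j' := h
      have hll' : l' = l.rotate ((j + (k - j')) % k) := by
        have hmod := List.rotate_mod l (j + (k - j'))
        rw [hl] at hmod
        rw [hmod, ← List.rotate_rotate, h', List.rotate_rotate,
          Nat.add_sub_cancel' (le_of_lt hj'), ← hl', List.rotate_length]
      have hr : (j + (k - j')) % k < k := Nat.mod_lt _ hk
      rcases Nat.eq_zero_or_pos ((j + (k - j')) % k) with hz | hpos
      · rw [hz, List.rotate_zero] at hll'
        subst hll'
        refine ⟨rfl, ?_⟩
        apply Fin.ext
        exact primitive_rotate_inj (lyndon_primitive hlyn)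
          (by omega) (by omega) h'
      · exfalso
        refine lyndon_rotate_ne hlyn hpos (by omega) ?_
        rw [← hll']
        exact hlyn'
    · rintro ⟨p, hp, hprim⟩
      obtain ⟨i, hi, hlyn⟩ := exists_lyndon_rotate hprim
      rw [hp] at hi
      refine ⟨⟨⟨p.rotate i, by rw [List.length_rotate]; exact hp, hlyn⟩,
        ⟨(k - i) % k, Nat.mod_lt _ hk⟩⟩, ?_⟩
      apply Subtype.ext
      show (p.rotate i).rotate ((k - i) % k) = p
      have hmod := List.rotate_mod (p.rotate i) (k - i)
      rw [List.length_rotate, hp] at hmod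
      rw [hmod, List.rotate_rotate, Nat.add_sub_cancel' (le_of_lt hi), ← hp,
        List.rotate_length]
  have := Nat.card_eq_of_bijective _ hbij
  rw [Pc, Lc, ← this, Nat.card_prod, Nat.card_eq_fintype_card (α := Fin k),
    Fintype.card_fin, Nat.mul_comm]


lemma step_B (m k : ℕ) (hk : 0 < k) :
    ∑ d ∈ k.divisors, Pc m d = m ^ k := by
  classical
  haveI : ∀ d : {d // d ∈ k.divisors},
      Finite {u : List (Fin m) // u.length = d.1 ∧ Primitive u} :=
    fun d => finite_sub m d.1 Primitive
  have hbij : Function.Bijective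
      (fun p : (Σ d : {d // d ∈ k.divisors},
          {u : List (Fin m) // u.length = d.1 ∧ Primitive u}) =>
        (⟨pw (k / p.1.1) p.2.1, by
          rw [pw_length, p.2.2.1]
          exact Nat.div_mul_cancel (Nat.mem_divisors.mp p.1.2).1⟩ :
          {w : List (Fin m) // w.length = k})) := by
    constructor
    · rintro ⟨⟨d, hd⟩, ⟨u, hu, hup⟩⟩ ⟨⟨e, he⟩, ⟨v, hv, hvp⟩⟩ h
      simp only [Subtype.mk.injEq] at h
      have hddvd : d ∣ k := (Nat.mem_divisors.mp hd).1
      have hedvd : e ∣ k := (Nat.mem_divisors.mp he).1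
      have hdpos : 0 < d := Nat.pos_of_mem_divisors hd
      have hepos : 0 < e := Nat.pos_of_mem_divisors he
      set w := pw (k / d) u with hwdef
      have hwlen : w.length = k := by
        rw [hwdef, pw_length, hu]; exact Nat.div_mul_cancel hddvd
      have h0 : 0 < w.length := by omega
      have hru := root_unique w u h0 d hdpos (by rw [hwlen]; exact hddvd) hu hup
        (by rw [hwlen])
      have hrv := root_unique w v h0 e hepos (by rw [hwlen]; exact hedvd) hv hvp
        (by rw [hwlen]; exact h)
      obtain rfl : d = e := by rw [hru.1, hrv.1]
      obtain rfl : u = v := by rw [hru.2, hrv.2]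
      rfl
    · rintro ⟨w, hw⟩
      have h0 : 0 < w.length := by omega
      obtain ⟨d, u, hdpos, hdvd, hu, hup, hpw⟩ := exists_decomp w h0
      refine ⟨⟨⟨d, Nat.mem_divisors.mpr ⟨by rw [← hw]; exact hdvd, by omega⟩⟩,
        ⟨u, hu, hup⟩⟩, ?_⟩
      apply Subtype.ext
      show pw (k / d) u = w
      rw [← hw, ← hpw]
  have hcard := Nat.card_eq_of_bijective _ hbij
  rw [card_words] at hcard
  rw [← hcard]
  haveI : ∀ d : {d // d ∈ k.divisors},
      Fintype {u : List (Fin m) // u.length = d.1 ∧ Primitive u} :=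
    fun d => Fintype.ofFinite _
  rw [Nat.card_eq_fintype_card, Fintype.card_sigma]
  rw [← Finset.sum_coe_sort k.divisors (fun d => Pc m d)]
  apply Finset.sum_congr rfl
  intro d _
  rw [Pc, Nat.card_eq_fintype_card]

lemma key_identity (m k : ℕ) (hk : 0 < k) :
    ∑ d ∈ k.divisors, ((d : ℤ) * (Lc m d : ℤ)) = (m : ℤ) ^ k := by
  have hB := step_B m k hk
  have : ∑ d ∈ k.divisors, ((d : ℤ) * (Lc m d : ℤ))
      = ∑ d ∈ k.divisors, (Pc m d : ℤ) := by
    apply Finset.sum_congr rfl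
    intro d hd
    have hdpos : 0 < d := Nat.pos_of_mem_divisors hd
    rw [step_A m d hdpos]
    push_cast
    ring
  rw [this, ← Nat.cast_sum, hB]
  push_cast
  ring

end LyndonAux

/-- The number of Lyndon words of length `n` over an alphabet with `m` letters
equals the necklace number `φ_n(m) = (1/n) ∑_{d ∣ n} μ(d) m^(n/d)`. -/
theorem lyndon_count (m n : ℕ) (hn : 0 < n) :
    (Nat.card {w : List (Fin m) // w.length = n ∧ IsLyndon w} : ℤ) * n =
      ∑ d ∈ n.divisors, (ArithmeticFunction.moebius d) * (m : ℤ) ^ (n / d) := by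
  have hinv := (ArithmeticFunction.sum_eq_iff_sum_smul_moebius_eq
    (R := ℤ) (f := fun d => (d : ℤ) * (LyndonAux.Lc m d : ℤ))
    (g := fun k => (m : ℤ) ^ k)).mp
    (fun k hk => LyndonAux.key_identity m k hk) n hn
  have hL : (Nat.card {w : List (Fin m) // w.length = n ∧ IsLyndon w} : ℤ)
      = (LyndonAux.Lc m n : ℤ) := rfl
  rw [hL]
  rw [← Nat.sum_divisorsAntidiagonal
    (fun a b => ((ArithmeticFunction.moebius a : ℤ) * (m : ℤ) ^ b))]
  rw [mul_comm, ← hinv]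
  apply Finset.sum_congr rfl
  intro x hx
  rw [zsmul_eq_mul]
  push_cast
  ring
end

section
/- For any words x_1 x_2 ⋯ x_k of length k over an alphabet X, the element (x_1 x_2 ⋯ x_k) + (-1)^k (x_k ⋯ x_2 x_1) of the free abelian group on words lies in the span of shuffle products u ш v of pairs of nonempty words; explicitly, (x_1⋯x_k) + (-1)^k (x_k⋯x_1) = ∑_{l=1}^{k-1} (-1)^{l-1} (x_l⋯x_2x_1) ш (x_{l+1}⋯x_k). -/
/-- The shuffle product of two words, as an element of the free `ℤ`-module on words. -/
noncomputable def shuffle {X : Type} : List X → List X → (List X →₀ ℤ)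
  | [], v => Finsupp.single v 1
  | u, [] => Finsupp.single u 1
  | a :: u, b :: v =>
      Finsupp.mapDomain (List.cons a) (shuffle u (b :: v)) +
      Finsupp.mapDomain (List.cons b) (shuffle (a :: u) v)
  termination_by u v => u.length + v.length

lemma shuffle_nil_left {X : Type} (v : List X) : shuffle [] v = Finsupp.single v 1 := by
  rw [shuffle]

lemma shuffle_nil_right {X : Type} (u : List X) : shuffle u [] = Finsupp.single u 1 := by
  cases u
  · rw [shuffle]
  · rw [shuffle]; simp

lemma shuffle_cons_cons {X : Type} (a b : X) (u v : List X) :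
    shuffle (a :: u) (b :: v) =
      Finsupp.mapDomain (List.cons a) (shuffle u (b :: v)) +
      Finsupp.mapDomain (List.cons b) (shuffle (a :: u) v) := by
  rw [shuffle]

lemma take_succ_reverse {X : Type} (l : List X) (n : ℕ) (h : n < l.length) :
    (l.take (n+1)).reverse = l[n] :: (l.take n).reverse := by
  rw [List.take_succ, List.getElem?_eq_getElem h]
  simp

lemma key {X : Type} (l : List X) (hl : l ≠ []) :
    ∑ i ∈ Finset.range (l.length + 1),
      (-1:ℤ)^i • shuffle (l.take i).reverse (l.drop i) = 0 := by
  classical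
  set F : ℕ → (List X →₀ ℤ) := fun j =>
    if h : j < l.length then
      Finsupp.mapDomain (List.cons l[j]) (shuffle (l.take j).reverse (l.drop (j+1)))
    else 0 with hFdef
  have hF0 : l ≠ [] → shuffle (l.take 0).reverse (l.drop 0) = F 0 := by
    intro hl
    have h0 : 0 < l.length := List.length_pos_iff.mpr hl
    simp only [hFdef, dif_pos h0, List.take_zero, List.drop_zero, List.reverse_nil,
      shuffle_nil_left, Finsupp.mapDomain_single]
    conv_rhs => rw [← List.drop_eq_getElem_cons h0]
    simp
  have hA : ∀ j < l.length,
      shuffle (l.take (j+1)).reverse (l.drop (j+1)) = F j + F (j+1) := by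
    intro j hj
    by_cases hj1 : j + 1 < l.length
    · rw [take_succ_reverse l j hj, List.drop_eq_getElem_cons hj1, shuffle_cons_cons,
        hFdef]
      simp only [dif_pos hj, dif_pos hj1]
      rw [← List.drop_eq_getElem_cons hj1, take_succ_reverse l j hj]
    · have hjl : j + 1 = l.length := by omega
      rw [take_succ_reverse l j hj]
      have hdrop : l.drop (j+1) = [] := by
        apply List.drop_eq_nil_of_le; omega
      rw [hdrop, shuffle_nil_right, hFdef]
      simp only [dif_pos hj, dif_neg (by omega : ¬ (j+1 < l.length))]
      rw [hdrop, shuffle_nil_right, Finsupp.mapDomain_single]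
      rw [← take_succ_reverse l j hj, add_zero]
  have hFtop : F l.length = 0 := by simp [hFdef]
  have step1 : ∑ i ∈ Finset.range (l.length + 1),
      (-1:ℤ)^i • shuffle (l.take i).reverse (l.drop i)
      = (∑ i ∈ Finset.range l.length, (-1:ℤ)^(i+1) • (F i + F (i+1))) + (-1:ℤ)^0 • F 0 := by
    rw [Finset.sum_range_succ']
    congr 1
    · exact Finset.sum_congr rfl fun i hi => by rw [hA i (Finset.mem_range.mp hi)]
    · rw [hF0 hl]
  have expand : ∑ i ∈ Finset.range l.length, (-1:ℤ)^(i+1) • (F i + F (i+1))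
      = (∑ i ∈ Finset.range l.length, (-1:ℤ)^(i+1) • F i)
        + ∑ i ∈ Finset.range l.length, (-1:ℤ)^(i+1) • F (i+1) := by
    rw [← Finset.sum_add_distrib]
    exact Finset.sum_congr rfl fun i _ => smul_add _ _ _
  have h1 : ∑ i ∈ Finset.range l.length, (-1:ℤ)^(i+1) • F i
      = - ∑ i ∈ Finset.range l.length, (-1:ℤ)^i • F i := by
    rw [← Finset.sum_neg_distrib]
    exact Finset.sum_congr rfl fun i _ => by rw [pow_succ, mul_neg_one, neg_smul]
  have h2 : ∑ i ∈ Finset.range l.length, (-1:ℤ)^(i+1) • F (i+1)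
      = (∑ i ∈ Finset.range l.length, (-1:ℤ)^i • F i)
        + (-1:ℤ)^l.length • F l.length - (-1:ℤ)^0 • F 0 := by
    have e1 := Finset.sum_range_succ' (fun i => (-1:ℤ)^i • F i) l.length
    have e2 := Finset.sum_range_succ (fun i => (-1:ℤ)^i • F i) l.length
    rw [e2] at e1
    rw [eq_sub_iff_add_eq]
    exact e1.symm
  rw [step1, expand, h1, h2, hFtop, smul_zero]
  abel


/-- For a word `l = x₁ ⋯ x_k` (k ≥ 1),
`(x₁ ⋯ x_k) + (-1)^k (x_k ⋯ x₁) = ∑_{l=1}^{k-1} (-1)^{l-1} (x_l ⋯ x₁) ш (x_{l+1} ⋯ x_k)`,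
so this element lies in the span of shuffle products of pairs of nonempty words. -/
theorem word_plus_sign_reverse_eq_sum_shuffles {X : Type} (l : List X) (hl : l ≠ []) :
    Finsupp.single l (1 : ℤ) + (-1 : ℤ) ^ l.length • Finsupp.single l.reverse (1 : ℤ) =
      ∑ i ∈ Finset.range (l.length - 1),
        (-1 : ℤ) ^ i • shuffle ((l.take (i + 1)).reverse) (l.drop (i + 1)) := by
  have h2 := key l hl
  obtain ⟨m, hm⟩ : ∃ m, l.length = m + 1 :=
    ⟨l.length - 1, by have := List.length_pos_iff.mpr hl; omega⟩
  rw [hm, Finset.sum_range_succ, Finset.sum_range_succ'] at h2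
  have hAm : shuffle (l.take (m+1)).reverse (l.drop (m+1)) = Finsupp.single l.reverse 1 := by
    rw [← hm, List.take_length, List.drop_length, shuffle_nil_right]
  have hA0 : shuffle (l.take 0).reverse (l.drop 0) = Finsupp.single l 1 := by
    simp [shuffle_nil_left]
  rw [hAm, hA0, pow_zero, one_smul] at h2
  have hS : ∑ i ∈ Finset.range m, (-1:ℤ)^(i+1) • shuffle (l.take (i+1)).reverse (l.drop (i+1))
      = - ∑ i ∈ Finset.range m, (-1:ℤ)^i • shuffle (l.take (i+1)).reverse (l.drop (i+1)) := by
    rw [← Finset.sum_neg_distrib]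
    exact Finset.sum_congr rfl fun i _ => by rw [pow_succ, mul_neg_one, neg_smul]
  rw [hS] at h2
  rw [hm]
  simp only [Nat.add_sub_cancel]
  rw [add_assoc, neg_add_eq_zero] at h2
  exact h2.symm
end

section
/- Let R be a commutative ring, (·,·) : A × B → R a non-degenerate bilinear map of R-modules, L a finite set, and a_w ∈ A, b_w ∈ B for w ∈ L. If the matrix ((a_w, b_{w'}))_{w,w' ∈ L} is invertible and the family (a_w) generates A, then (a_w)_{w∈L} is an R-basis of A and (b_w)_{w∈L} is an R-basis of B. -/
/-- If `(·,·) : A × B → R` is a non-degenerate bilinear map, `L` a finite index set,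
`a : L → A` generates `A`, and the matrix `((a_w, b_{w'}))` is invertible, then
`(a_w)` is an `R`-basis of `A` and `(b_w)` is an `R`-basis of `B`. -/
theorem basis_of_invertible_pairing_matrix (R : Type) [CommRing R]
    (A B : Type) [AddCommGroup A] [AddCommGroup B] [Module R A] [Module R B]
    (pair : A →ₗ[R] B →ₗ[R] R)
    (hleft : ∀ a : A, (∀ b : B, pair a b = 0) → a = 0)
    (hright : ∀ b : B, (∀ a : A, pair a b = 0) → b = 0)
    (L : Type) [Fintype L] [DecidableEq L] (a : L → A) (b : L → B)
    (hinv : IsUnit (Matrix.of fun w w' : L => pair (a w) (b w')))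
    (hgen : Submodule.span R (Set.range a) = ⊤) :
    (LinearIndependent R a ∧ Submodule.span R (Set.range a) = ⊤) ∧
    (LinearIndependent R b ∧ Submodule.span R (Set.range b) = ⊤) := by
  set M : Matrix L L R := Matrix.of fun w w' : L => pair (a w) (b w') with hMdef
  have hdet : IsUnit M.det := (Matrix.isUnit_iff_isUnit_det M).mp hinv
  have hMi : M * M⁻¹ = 1 := Matrix.mul_nonsing_inv M hdet
  have hiM : M⁻¹ * M = 1 := Matrix.nonsing_inv_mul M hdet
  have hMentry : ∀ w w', M w w' = pair (a w) (b w') := fun w w' => rfl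
  have ha : LinearIndependent R a := by
    rw [Fintype.linearIndependent_iff]
    intro c hc
    have h1 : ∀ w', ∑ w, c w * M w w' = 0 := by
      intro w'
      have := congrArg (fun x => pair x (b w')) hc
      simpa [map_sum, Finset.sum_apply, hMentry] using this
    have h2 : Matrix.vecMul c M = 0 := by
      funext w'
      simpa [Matrix.vecMul, dotProduct] using h1 w'
    have h3 : c = 0 := by
      have := congrArg (fun v => Matrix.vecMul v M⁻¹) h2
      simpa [Matrix.vecMul_vecMul, hMi] using this
    exact fun i => congrFun h3 i
  have hb : LinearIndependent R b := by
    rw [Fintype.linearIndependent_iff]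
    intro d hd
    have h1 : ∀ w, ∑ w', M w w' * d w' = 0 := by
      intro w
      have := congrArg (fun x => pair (a w) x) hd
      simpa [map_sum, map_smul, hMentry, mul_comm] using this
    have h2 : Matrix.mulVec M d = 0 := by
      funext w
      simpa [Matrix.mulVec, dotProduct] using h1 w
    have h3 : d = 0 := by
      have := congrArg (fun v => Matrix.mulVec M⁻¹ v) h2
      simpa [Matrix.mulVec_mulVec, hiM] using this
    exact fun i => congrFun h3 i
  refine ⟨⟨ha, hgen⟩, hb, ?_⟩
  rw [eq_top_iff]
  rintro x -
  set v : L → R := fun w => pair (a w) x with hv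
  set c : L → R := Matrix.mulVec M⁻¹ v with hcdef
  have hc : Matrix.mulVec M c = v := by
    rw [hcdef, Matrix.mulVec_mulVec, hMi, Matrix.one_mulVec]
  have key : x = ∑ w', c w' • b w' := by
    have h0 : ∀ a', pair a' (x - ∑ w', c w' • b w') = 0 := by
      have hfg : pair.flip (x - ∑ w', c w' • b w') = 0 := by
        apply LinearMap.ext_on hgen
        rintro _ ⟨w, rfl⟩
        have hcw : ∑ w', M w w' * c w' = v w := by
          have := congrFun hc w
          simpa [Matrix.mulVec, dotProduct] using this
        simp only [LinearMap.zero_apply, map_sub, map_sum, map_smul, LinearMap.sub_apply,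
          LinearMap.sum_apply, LinearMap.smul_apply, LinearMap.flip_apply, smul_eq_mul,
          sub_eq_zero]
        simpa [hMentry, mul_comm, hv] using hcw.symm
      intro a'
      have := congrFun (congrArg DFunLike.coe hfg) a'
      simpa using this
    exact sub_eq_zero.mp (hright _ (fun a' => h0 a'))
  rw [key]
  exact Submodule.sum_mem _ fun w _ =>
    Submodule.smul_mem _ _ (Submodule.subset_span ⟨w, rfl⟩)
end

section
/- For each Lyndon word w over a totally ordered alphabet X, define τ_w in the free group S on X and P_w ∈ ℤ⟨X⟩ recursively: τ_{(x)} = x, P_{(x)} = x for letters x; and for the standard factorization w = w'w'' of a Lyndon word of length > 1, τ_w = [τ_{w'}, τ_{w''}] and P_w = P_{w'}P_{w''} − P_{w''}P_{w'}. Then P_w − w is a ℤ-linear combination of words of length |w| that are strictly larger than w in the lexicographic order. -/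
/-- `w = w' ++ w''` is the standard factorization of the Lyndon word `w`:
`w''` is the longest proper Lyndon suffix of `w`. -/
def IsStandardFactorization {X : Type} [LinearOrder X] (w w' w'' : List X) : Prop :=
  w = w' ++ w'' ∧ w' ≠ [] ∧ IsLyndon w'' ∧
    ∀ s t : List X, w = s ++ t → s ≠ [] → t ≠ [] → IsLyndon t → t.length ≤ w''.length

section AuxLex

variable {X : Type} [LinearOrder X]

lemma lex_trans : ∀ {a b c : List X},
    List.Lex (· < ·) a b → List.Lex (· < ·) b c → List.Lex (· < ·) a c
  | _, _, _, .nil, .cons _ => .nil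
  | _, _, _, .nil, .rel _ => .nil
  | _, _, _, .rel h, .cons _ => .rel h
  | _, _, _, .rel h, .rel h' => .rel (lt_trans h h')
  | _, _, _, .cons _, .rel h' => .rel h'
  | _, _, _, .cons h, .cons h' => .cons (lex_trans h h')

lemma lex_asymm {a b : List X} (h1 : List.Lex (· < ·) a b) (h2 : List.Lex (· < ·) b a) :
    False :=
  (List.Lex.asymm (· < ·)).asymm a b h1 h2

lemma lex_irrefl {a : List X} (h : List.Lex (· < ·) a a) : False := lex_asymm h h

lemma lex_append_cancel_left :
    ∀ (c a b : List X), List.Lex (· < ·) (c ++ a) (c ++ b) → List.Lex (· < ·) a b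
  | [], _, _, h => h
  | _ :: c, a, b, h => lex_append_cancel_left c a b ((List.cons_lex_cons_iff.mp h).resolve_left (lt_irrefl _)).2

lemma lex_append_of_length_eq : ∀ {u p : List X}, List.Lex (· < ·) u p →
    u.length = p.length → ∀ (a b : List X), List.Lex (· < ·) (u ++ a) (p ++ b)
  | _, _, .nil, hl => by simp at hl
  | _, _, .rel h, _ => fun _ _ => .rel h
  | _, _, .cons h, hl => fun a b => .cons (lex_append_of_length_eq h (by simpa using hl) a b)

lemma lexE (s : List X) : ∀ (w u v : List X), List.Lex (· < ·) w (s ++ v) → u <+: w →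
    s.length ≤ u.length → s <+: w ∨ List.Lex (· < ·) u s := by
  induction s with
  | nil => intro w u v _ _ _; exact Or.inl (List.nil_prefix)
  | cons a s ih =>
    intro w u v h hu hlen
    match w, u with
    | [], u =>
      have : u = [] := List.prefix_nil.mp hu
      subst this; simp at hlen
    | b :: w', [] => simp at hlen
    | b :: w', c :: u' =>
      obtain ⟨rfl, hu'⟩ := (List.cons_prefix_cons).mp hu
      cases h with
      | rel hba => exact Or.inr (List.Lex.rel hba)
      | cons h' =>
        rcases ih w' u' v h' hu' (Nat.succ_le_succ_iff.mp hlen) with hp | hl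
        · exact Or.inl (List.cons_prefix_cons.mpr ⟨rfl, hp⟩)
        · exact Or.inr (List.Lex.cons hl)

/-- Existence of the standard factorization, with both factors Lyndon. -/
lemma exists_std (w : List X) (hw : IsLyndon w) (hlen : 1 < w.length) :
    ∃ u v : List X, IsStandardFactorization w u v ∧ IsLyndon u ∧ IsLyndon v := by
  classical
  set S : Finset (List X) :=
    (w.tails.toFinset.filter (fun t => t ≠ [] ∧ t ≠ w)) with hS
  have hmem : ∀ t, t ∈ S ↔ (t <:+ w ∧ t ≠ [] ∧ t ≠ w) := by
    intro t
    simp [hS, List.mem_tails]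
  have hSne : S.Nonempty := by
    refine ⟨w.tail, (hmem _).mpr ⟨List.tail_suffix w, ?_, ?_⟩⟩
    · intro h
      have := congrArg List.length h
      simp [List.length_tail] at this
      omega
    · intro h
      have := congrArg List.length h
      simp [List.length_tail] at this
      omega
  set v : List X := S.min' hSne with hv
  have hvS : v ∈ S := S.min'_mem hSne
  obtain ⟨hvsuff, hvne, hvnw⟩ := (hmem v).mp hvS
  have hmin : ∀ t ∈ S, t = v ∨ List.Lex (· < ·) v t := by
    intro t ht
    rcases lt_or_eq_of_le (S.min'_le t ht) with h | h
    · exact Or.inr h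
    · exact Or.inl h.symm
  obtain ⟨u, huv⟩ := hvsuff
  have hune : u ≠ [] := by
    rintro rfl
    exact hvnw huv
  have hul : u.length + v.length = w.length := by
    have := congrArg List.length huv
    rwa [List.length_append] at this
  have hupos : 0 < u.length := List.length_pos_iff.mpr hune
  have hvpos : 0 < v.length := List.length_pos_iff.mpr hvne
  have hvltw : v.length < w.length := by omega
  -- v is Lyndon
  have hLv : IsLyndon v := by
    refine ⟨hvne, ?_⟩
    intro a b hab ha hb
    have hapos : 0 < a.length := List.length_pos_iff.mpr ha
    have hablen : a.length + b.length = v.length := by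
      have := congrArg List.length hab
      rw [List.length_append] at this
      omega
    have hbS : b ∈ S := by
      refine (hmem b).mpr ⟨⟨u ++ a, by rw [List.append_assoc, ← hab, huv]⟩, hb, ?_⟩
      intro h
      have := congrArg List.length h
      omega
    rcases hmin b hbS with heq | hlex
    · exfalso
      have := congrArg List.length heq
      omega
    · exact hlex
  -- v is the longest Lyndon proper suffix
  have hlong : ∀ s t : List X, w = s ++ t → s ≠ [] → t ≠ [] → IsLyndon t →
      t.length ≤ v.length := by
    intro s t hst hs ht htL
    by_contra hgt
    push_neg at hgt
    have hspos : 0 < s.length := List.length_pos_iff.mpr hs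
    have hstlen : s.length + t.length = w.length := by
      have := congrArg List.length hst
      rw [List.length_append] at this
      omega
    have htS : t ∈ S := by
      refine (hmem t).mpr ⟨⟨s, hst.symm⟩, ht, ?_⟩
      intro h
      have := congrArg List.length h
      omega
    have hvt : v <:+ t :=
      List.suffix_of_suffix_length_le ⟨u, huv⟩ ⟨s, hst.symm⟩ (le_of_lt hgt)
    obtain ⟨r, hr⟩ := hvt
    have hrne : r ≠ [] := by
      rintro rfl
      simp at hr
      rw [hr] at hgt
      omega
    have h1 : List.Lex (· < ·) t v := htL.2 r v hr.symm hrne hvne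
    rcases hmin t htS with heq | h2
    · rw [heq] at h1; exact lex_irrefl h1
    · exact lex_asymm h1 h2
  -- u is Lyndon
  have hLu : IsLyndon u := by
    refine ⟨hune, ?_⟩
    intro p s hps hp hs
    have hppos : 0 < p.length := List.length_pos_iff.mpr hp
    have hpslen : p.length + s.length = u.length := by
      have := congrArg List.length hps
      rw [List.length_append] at this
      omega
    have hw2 : List.Lex (· < ·) w (s ++ v) := by
      refine hw.2 p (s ++ v) ?_ hp (by simp [hs])
      rw [← huv, hps, List.append_assoc]
    have hslen : s.length < u.length := by omega
    rcases lexE s w u v hw2 ⟨v, huv⟩ (le_of_lt hslen) with hpre | hlex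
    · exfalso
      obtain ⟨r, hr⟩ := hpre
      have hsrlen : s.length + r.length = w.length := by
        have := congrArg List.length hr
        rw [List.length_append] at this
        omega
      have hspos : 0 < s.length := List.length_pos_iff.mpr hs
      have hrne : r ≠ [] := by
        rintro rfl
        simp at hsrlen
        omega
      have hrS : r ∈ S := by
        refine (hmem r).mpr ⟨⟨s, hr⟩, hrne, ?_⟩
        intro h
        have := congrArg List.length h
        omega
      have hcancel : List.Lex (· < ·) r v := by
        apply lex_append_cancel_left s
        rw [hr]
        exact hw2
      rcases hmin r hrS with heq | h2
      · rw [heq] at hcancel; exact lex_irrefl hcancel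
      · exact lex_asymm hcancel h2
    · exact hlex
  exact ⟨u, v, ⟨huv.symm, hune, hLv, hlong⟩, hLu, hLv⟩

end AuxLex

open Pointwise in
/-- Triangularity: if `P : words → ℤ⟨X⟩` satisfies `P_{(x)} = x` and
`P_w = P_{w'} P_{w''} − P_{w''} P_{w'}` along standard factorizations of Lyndon words,
then for every Lyndon word `w`, `P_w − w` is a `ℤ`-linear combination of words of
length `|w|` that are strictly larger than `w` lexicographically. -/
theorem lyndon_polynomial_triangular (X : Type) [LinearOrder X]
    (P : List X → MonoidAlgebra ℤ (FreeMonoid X))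
    (hbase : ∀ x : X, P [x] = MonoidAlgebra.single (FreeMonoid.ofList [x]) (1 : ℤ))
    (hrec : ∀ w w' w'' : List X, IsLyndon w → 1 < w.length →
      IsStandardFactorization w w' w'' →
      P w = P w' * P w'' - P w'' * P w')
    (w : List X) (hw : IsLyndon w) :
    ∀ v ∈ (P w - MonoidAlgebra.single (FreeMonoid.ofList w) (1 : ℤ)).coeff.support,
      (FreeMonoid.toList v).length = w.length ∧
      List.Lex (· < ·) w (FreeMonoid.toList v) := by
  classical
  suffices H : ∀ n : ℕ, ∀ w : List X, w.length = n → IsLyndon w →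
      ∀ v ∈ (P w - MonoidAlgebra.single (FreeMonoid.ofList w) (1 : ℤ)).coeff.support,
        (FreeMonoid.toList v).length = w.length ∧
        List.Lex (· < ·) w (FreeMonoid.toList v) by
    exact H w.length w rfl hw
  intro n
  induction n using Nat.strong_induction_on with
  | _ n ih =>
    intro w hn hw
    rcases Nat.lt_or_ge 1 w.length with hlen | hlen
    · -- length > 1 : use the standard factorization
      obtain ⟨u, v, hstd, hLu, hLv⟩ := exists_std w hw hlen
      have hP := hrec w u v hw hlen hstd
      have huv : w = u ++ v := hstd.1
      have hune : u ≠ [] := hstd.2.1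
      have hvne : v ≠ [] := hLv.1
      have hupos : 0 < u.length := List.length_pos_iff.mpr hune
      have hvpos : 0 < v.length := List.length_pos_iff.mpr hvne
      have hwlen : w.length = u.length + v.length := by
        rw [huv, List.length_append]
      have hulen : u.length < n := by omega
      have hvlen : v.length < n := by omega
      set su := MonoidAlgebra.single (FreeMonoid.ofList u) (1 : ℤ) with hsu
      set sv := MonoidAlgebra.single (FreeMonoid.ofList v) (1 : ℤ) with hsv
      set A' := P u - su with hA'
      set B' := P v - sv with hB'
      have hsupA : ∀ q ∈ A'.coeff.support, (FreeMonoid.toList q).length = u.length ∧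
          List.Lex (· < ·) u (FreeMonoid.toList q) := ih u.length hulen u rfl hLu
      have hsupB : ∀ q ∈ B'.coeff.support, (FreeMonoid.toList q).length = v.length ∧
          List.Lex (· < ·) v (FreeMonoid.toList q) := ih v.length hvlen v rfl hLv
      have hsw : su * sv = MonoidAlgebra.single (FreeMonoid.ofList w) (1 : ℤ) := by
        rw [hsu, hsv, MonoidAlgebra.single_mul_single, one_mul, huv,
          FreeMonoid.ofList_append]
      have key : P w - MonoidAlgebra.single (FreeMonoid.ofList w) (1 : ℤ) =
          su * B' + A' * sv + A' * B' - P v * P u := by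
        rw [hP, ← hsw, hA', hB']
        noncomm_ring
      intro y hy
      rw [key] at hy
      have hy4 : y ∈ (su * B').coeff.support ∪ (A' * sv).coeff.support ∪ (A' * B').coeff.support ∪
          (P v * P u).coeff.support := by
        have h1 := Finsupp.support_sub (f := (su * B' + A' * sv + A' * B').coeff) (g := (P v * P u).coeff) hy
        rcases Finset.mem_union.mp h1 with h2 | h2
        · rw [MonoidAlgebra.coeff_add] at h2
          have h3 := Finsupp.support_add h2
          rcases Finset.mem_union.mp h3 with h4 | h4
          · rw [MonoidAlgebra.coeff_add] at h4
            have h5 := Finsupp.support_add h4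
            rcases Finset.mem_union.mp h5 with h6 | h6
            · exact Finset.mem_union_left _ (Finset.mem_union_left _
                (Finset.mem_union_left _ h6))
            · exact Finset.mem_union_left _ (Finset.mem_union_left _
                (Finset.mem_union_right _ h6))
          · exact Finset.mem_union_left _ (Finset.mem_union_right _ h4)
        · exact Finset.mem_union_right _ h2
      have hwv : List.Lex (· < ·) w v := hw.2 u v huv hune hvne
      rcases Finset.mem_union.mp hy4 with hy3 | hyD
      · rcases Finset.mem_union.mp hy3 with hy2 | hyC
        · rcases Finset.mem_union.mp hy2 with hyA | hyB
          · -- y ∈ (su * B').support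
            have := MonoidAlgebra.support_coeff_mul_subset su B' hyA
            rw [Finset.mem_mul] at this
            obtain ⟨p, hp, q, hq, rfl⟩ := this
            have hpu : p = FreeMonoid.ofList u :=
              Finset.mem_singleton.mp (Finsupp.support_single_subset hp)
            obtain ⟨hqlen, hqlex⟩ := hsupB q hq
            have hpl : FreeMonoid.toList p = u := by
              rw [hpu, FreeMonoid.toList_ofList]
            constructor
            · rw [FreeMonoid.toList_mul, hpl, List.length_append, hqlen, hwlen]
            · rw [FreeMonoid.toList_mul, hpl, huv]
              exact List.Lex.append_left _ hqlex u
          · -- y ∈ (A' * sv).support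
            have := MonoidAlgebra.support_coeff_mul_subset A' sv hyB
            rw [Finset.mem_mul] at this
            obtain ⟨p, hp, q, hq, rfl⟩ := this
            have hqv : q = FreeMonoid.ofList v :=
              Finset.mem_singleton.mp (Finsupp.support_single_subset hq)
            obtain ⟨hplen, hplex⟩ := hsupA p hp
            have hql : FreeMonoid.toList q = v := by
              rw [hqv, FreeMonoid.toList_ofList]
            constructor
            · rw [FreeMonoid.toList_mul, hql, List.length_append, hplen, hwlen]
            · rw [FreeMonoid.toList_mul, hql, huv]
              exact lex_append_of_length_eq hplex hplen.symm v _
        · -- y ∈ (A' * B').support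
          have := MonoidAlgebra.support_coeff_mul_subset A' B' hyC
          rw [Finset.mem_mul] at this
          obtain ⟨p, hp, q, hq, rfl⟩ := this
          obtain ⟨hplen, hplex⟩ := hsupA p hp
          obtain ⟨hqlen, hqlex⟩ := hsupB q hq
          constructor
          · rw [FreeMonoid.toList_mul, List.length_append, hplen, hqlen, hwlen]
          · rw [FreeMonoid.toList_mul, huv]
            exact lex_append_of_length_eq hplex hplen.symm v _
      · -- y ∈ (P v * P u).support
        have := MonoidAlgebra.support_coeff_mul_subset (P v) (P u) hyD
        rw [Finset.mem_mul] at this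
        obtain ⟨q, hq, p, hp, rfl⟩ := this
        have hPv : P v = sv + B' := by rw [hB']; abel
        have hPu : P u = su + A' := by rw [hA']; abel
        have hqcase : FreeMonoid.toList q = v ∨
            ((FreeMonoid.toList q).length = v.length ∧
              List.Lex (· < ·) v (FreeMonoid.toList q)) := by
          have hsub : (P v).coeff.support ⊆ sv.coeff.support ∪ B'.coeff.support := by
            rw [hPv, MonoidAlgebra.coeff_add]; exact Finsupp.support_add
          rcases Finset.mem_union.mp (hsub hq) with h | h
          · left
            have h' : q = FreeMonoid.ofList v :=
              Finset.mem_singleton.mp (Finsupp.support_single_subset h)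
            rw [h', FreeMonoid.toList_ofList]
          · right; exact hsupB q h
        have hpcase : (FreeMonoid.toList p).length = u.length := by
          have hsub : (P u).coeff.support ⊆ su.coeff.support ∪ A'.coeff.support := by
            rw [hPu, MonoidAlgebra.coeff_add]; exact Finsupp.support_add
          rcases Finset.mem_union.mp (hsub hp) with h | h
          · have h' : p = FreeMonoid.ofList u :=
              Finset.mem_singleton.mp (Finsupp.support_single_subset h)
            rw [h', FreeMonoid.toList_ofList]
          · exact (hsupA p h).1
        have hqlen : (FreeMonoid.toList q).length = v.length := by
          rcases hqcase with h | h
          · rw [h]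
          · exact h.1
        have hwq : List.Lex (· < ·) w (FreeMonoid.toList q) := by
          rcases hqcase with h | h
          · rw [h]; exact hwv
          · exact lex_trans hwv h.2
        constructor
        · rw [FreeMonoid.toList_mul, List.length_append, hqlen, hpcase, hwlen]
          omega
        · rw [FreeMonoid.toList_mul]
          exact List.Lex.append_right _ _ hwq
    · -- length ≤ 1 : w is a single letter
      have hne := hw.1
      have hpos : 0 < w.length := List.length_pos_iff.mpr hne
      have hlen1 : w.length = 1 := by omega
      obtain ⟨x, rfl⟩ := List.length_eq_one_iff.mp hlen1
      intro y hy
      rw [hbase x] at hy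
      simp at hy
end
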